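/- Let Ω ⊂ ℝ², ν ∈ ℝ², η₁, η₂ ∈ ℝ², and let 𝓜₁, 𝓜₂ : ℝ² → ℝ be real-valued functions. Define M₁, M₂ : Ω ∪ (Ω + ν) → ℂ by M_j(ξ) = e^{i ξ·η_j} 𝓜_j(ξ). Assume e^{i ν·(η₁ − η₂)} = −1, and assume that for every ξ ∈ Ω + ν, 𝓜₁(ξ) = 𝓜₂(ξ − ν) and 𝓜₂(ξ) = 𝓜₁(ξ − ν). Then for every ξ ∈ Ω with ξ + ν ∈ Ω + ν, M₁(ξ)·conj(M₁(ξ+ν)) + M₂(ξ)·conj(M₂(ξ+ν)) = 0. -/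

import Mathlib

open scoped ComplexConjugate Matrix

/-- if `M_j(ξ) = e^{i ξ·η_j} 𝓜_j(ξ)` on `Ω ∪ (Ω+ν)`, the phases satisfy
`e^{i ν·(η₁-η₂)} = -1`, and the real profiles swap under the shift `ν`, then the local
shift cancellation identity holds on `Ω`. -/
theorem stmt_9 (Ω : Set (Fin 2 → ℝ)) (ν η₁ η₂ : Fin 2 → ℝ)
    (𝓜₁ 𝓜₂ : (Fin 2 → ℝ) → ℝ) (M₁ M₂ : (Fin 2 → ℝ) → ℂ)
    (hM₁ : ∀ ξ ∈ Ω ∪ (fun η => η + ν) '' Ω,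
      M₁ ξ = Complex.exp (Complex.I * (ξ ⬝ᵥ η₁ : ℝ)) * (𝓜₁ ξ : ℂ))
    (hM₂ : ∀ ξ ∈ Ω ∪ (fun η => η + ν) '' Ω,
      M₂ ξ = Complex.exp (Complex.I * (ξ ⬝ᵥ η₂ : ℝ)) * (𝓜₂ ξ : ℂ))
    (hphase : Complex.exp (Complex.I * (ν ⬝ᵥ (η₁ - η₂) : ℝ)) = -1)
    (hswap : ∀ ξ ∈ (fun η => η + ν) '' Ω, 𝓜₁ ξ = 𝓜₂ (ξ - ν) ∧ 𝓜₂ ξ = 𝓜₁ (ξ - ν)) :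
    ∀ ξ ∈ Ω, ξ + ν ∈ (fun η => η + ν) '' Ω →
      M₁ ξ * conj (M₁ (ξ + ν)) + M₂ ξ * conj (M₂ (ξ + ν)) = 0 := by
  intro ξ hξ hξν
  obtain ⟨h1, h2⟩ := hswap (ξ + ν) hξν
  have hsub : ξ + ν - ν = ξ := by simp
  rw [hsub] at h1 h2
  rw [hM₁ ξ (Or.inl hξ), hM₁ _ (Or.inr hξν), hM₂ ξ (Or.inl hξ), hM₂ _ (Or.inr hξν),
    h1, h2]
  have hdot1 : ((ξ + ν) ⬝ᵥ η₁ : ℝ) = ξ ⬝ᵥ η₁ + ν ⬝ᵥ η₁ := add_dotProduct ..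
  have hdot2 : ((ξ + ν) ⬝ᵥ η₂ : ℝ) = ξ ⬝ᵥ η₂ + ν ⬝ᵥ η₂ := add_dotProduct ..
  have hdot3 : (ν ⬝ᵥ (η₁ - η₂) : ℝ) = ν ⬝ᵥ η₁ - ν ⬝ᵥ η₂ := dotProduct_sub ..
  rw [hdot3] at hphase
  rw [hdot1, hdot2]
  simp only [map_mul, ← Complex.exp_conj, map_mul, Complex.conj_I, Complex.conj_ofReal,
    Complex.ofReal_add, Complex.ofReal_sub, mul_add, mul_sub,
    Complex.exp_add, Complex.exp_sub, neg_mul, Complex.exp_neg] at hphase ⊢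
  set a := Complex.exp (Complex.I * (ξ ⬝ᵥ η₁ : ℝ))
  set b := Complex.exp (Complex.I * (ξ ⬝ᵥ η₂ : ℝ))
  set p := Complex.exp (Complex.I * (ν ⬝ᵥ η₁ : ℝ))
  set q := Complex.exp (Complex.I * (ν ⬝ᵥ η₂ : ℝ))
  have ha : a ≠ 0 := Complex.exp_ne_zero _
  have hb : b ≠ 0 := Complex.exp_ne_zero _
  have hp : p ≠ 0 := Complex.exp_ne_zero _
  have hq : q ≠ 0 := Complex.exp_ne_zero _
  field_simp at hphase
  field_simp [hphase]
  rw [hphase]; ring
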